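/- arXiv:1701.07011 — 3 statements merged into one kernel-verified Lean document; each statement's English description precedes it below -/
import Mathlib

section
/- Let n ≥ 1, let x ∈ ℝⁿ be a nonzero vector, r ∈ ℝⁿ, and λ > 0. Define f : ℝ → ℝ by f(α) = (1/(2n))‖r − α·x‖₂² + λ|α|. Then a point α* ∈ ℝ is a minimizer of f with α* > 0 if and only if ⟨x, r⟩ > nλ (where ⟨·,·⟩ is the Euclidean inner product). -/
open Finset

/-- For the one-variable lasso objective
`f(α) = (1/(2n)) ‖r − α·x‖₂² + λ|α|` with `x ≠ 0` and `λ > 0`,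
there is a minimizer `α* > 0` if and only if `⟨x, r⟩ > nλ`. -/
theorem lasso_univariate_pos_minimizer (n : ℕ) (hn : 1 ≤ n) (x r : Fin n → ℝ)
    (hx : x ≠ 0) (lam : ℝ) (hlam : 0 < lam) :
    (∃ a : ℝ,
        IsMinOn (fun α : ℝ => (1 / (2 * (n : ℝ))) * ∑ i, (r i - α * x i) ^ 2 + lam * |α|)
          Set.univ a ∧ 0 < a) ↔
      (n : ℝ) * lam < ∑ i, x i * r i := by
  set A : ℝ := ∑ i, x i ^ 2 with hAdef
  set B : ℝ := ∑ i, x i * r i with hBdef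
  set C : ℝ := ∑ i, r i ^ 2 with hCdef
  set u : ℝ := 1 / (2 * (n : ℝ)) with hudef
  have hn' : (0 : ℝ) < n := by exact_mod_cast hn
  have hu : 0 < u := by positivity
  have hun : u * (2 * (n : ℝ)) = 1 := by
    rw [hudef, one_div, inv_mul_cancel₀ (by positivity)]
  have hA : 0 < A := by
    obtain ⟨j, hj⟩ := Function.ne_iff.mp hx
    exact Finset.sum_pos' (fun i _ => sq_nonneg _) ⟨j, Finset.mem_univ j, lt_of_le_of_ne (sq_nonneg _) (Ne.symm (pow_ne_zero 2 hj))⟩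
  have expand : ∀ α : ℝ, ∑ i, (r i - α * x i) ^ 2 = C - 2 * α * B + α ^ 2 * A := by
    intro α
    rw [hCdef, hBdef, hAdef, Finset.mul_sum, Finset.mul_sum, ← Finset.sum_sub_distrib,
      ← Finset.sum_add_distrib]
    exact Finset.sum_congr rfl fun i _ => by ring
  have feq : ∀ α : ℝ,
      (1 / (2 * (n : ℝ))) * ∑ i, (r i - α * x i) ^ 2 + lam * |α|
        = u * (C - 2 * α * B + α ^ 2 * A) + lam * |α| := by
    intro α; rw [expand α, hudef]
  constructor
  · rintro ⟨a, hmin, ha⟩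
    have h0 := isMinOn_iff.mp hmin 0 (Set.mem_univ 0)
    simp only [expand, abs_zero, abs_of_pos ha] at h0
    -- h0 : u * (C - 2*a*B + a^2*A) + lam*a ≤ u * (C - 0 + 0) + 0
    nlinarith [h0, mul_pos hu (mul_pos hA (mul_pos ha ha)), mul_pos hu ha,
      mul_pos hlam ha, hun, mul_pos (mul_pos hu ha) hlam]
  · intro hB
    refine ⟨(B - n * lam) / A, ?_, div_pos (by linarith) hA⟩
    have haA : A * ((B - n * lam) / A) = B - n * lam := by
      field_simp
    set a : ℝ := (B - n * lam) / A with hadef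
    have ha : 0 < a := div_pos (by linarith) hA
    rw [isMinOn_iff]
    intro α _
    simp only [expand, abs_of_pos ha]
    have habs : α ≤ |α| := le_abs_self α
    have hkey : u * (C - 2 * α * B + α ^ 2 * A) + lam * |α|
        - (u * (C - 2 * a * B + a ^ 2 * A) + lam * a)
        = u * A * (α - a) ^ 2 + lam * (|α| - α) := by
      have hB' : B = A * a + (n : ℝ) * lam := by linarith [haA]
      linear_combination (2 * u * (a - α)) * hB' + (lam * (a - α)) * hun
    nlinarith [hkey, mul_nonneg (mul_nonneg hu.le hA.le) (sq_nonneg (α - a)),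
      mul_nonneg hlam.le (sub_nonneg.mpr habs)]
end

section
/- Let n ≥ 1, let x ∈ ℝⁿ be a nonzero vector, r ∈ ℝⁿ, and λ > 0. Define f : ℝ → ℝ by f(α) = (1/(2n))‖r − α·x‖₂² + λ|α|. Then a point α* ∈ ℝ is a minimizer of f with α* < 0 if and only if ⟨x, r⟩ < −nλ. -/
open Finset

/-- For the one-variable lasso objective
`f(α) = (1/(2n)) ‖r − α·x‖₂² + λ|α|` with `x ≠ 0` and `λ > 0`,
there is a minimizer `α* < 0` if and only if `⟨x, r⟩ < −nλ`. -/
theorem lasso_univariate_neg_minimizer (n : ℕ) (hn : 1 ≤ n) (x r : Fin n → ℝ)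
    (hx : x ≠ 0) (lam : ℝ) (hlam : 0 < lam) :
    (∃ a : ℝ,
        IsMinOn (fun α : ℝ => (1 / (2 * (n : ℝ))) * ∑ i, (r i - α * x i) ^ 2 + lam * |α|)
          Set.univ a ∧ a < 0) ↔
      ∑ i, x i * r i < -((n : ℝ) * lam) := by
  set S : ℝ := ∑ i, x i ^ 2 with hS
  set P : ℝ := ∑ i, x i * r i with hP
  set R : ℝ := ∑ i, r i ^ 2 with hR
  have hnpos : (0 : ℝ) < n := by exact_mod_cast hn
  have hn0 : (n : ℝ) ≠ 0 := ne_of_gt hnpos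
  have hSpos : 0 < S := by
    obtain ⟨i, hi⟩ : ∃ i, x i ≠ 0 := by
      by_contra h
      push_neg at h
      exact hx (funext h)
    refine Finset.sum_pos' (fun j _ => sq_nonneg _) ⟨i, Finset.mem_univ i, ?_⟩
    positivity
  have expand : ∀ α : ℝ, ∑ i, (r i - α * x i) ^ 2 = R - 2 * α * P + α ^ 2 * S := by
    intro α
    have h : ∀ i, (r i - α * x i) ^ 2
        = r i ^ 2 - 2 * α * (x i * r i) + α ^ 2 * x i ^ 2 := fun i => by ring
    simp_rw [h]
    rw [Finset.sum_add_distrib, Finset.sum_sub_distrib, ← Finset.mul_sum, ← Finset.mul_sum]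
  have e1 : ∀ z w : ℝ, 1 / (2 * (n : ℝ)) * z + lam * w
      = (z + 2 * n * (lam * w)) / (2 * n) := by
    intro z w; field_simp
  have h2 : (0 : ℝ) < 2 * n := by positivity
  constructor
  · rintro ⟨a, hmin, ha⟩
    have h0 := isMinOn_iff.mp hmin 0 (Set.mem_univ (0 : ℝ))
    simp only [expand, abs_of_neg ha, abs_zero, mul_zero, add_zero] at h0
    rw [e1] at h0
    rw [show (1:ℝ) / (2 * (n:ℝ)) * (R - 0 * P + 0 ^ 2 * S) = R / (2 * (n:ℝ)) from by ring] at h0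
    rw [div_le_div_iff_of_pos_right h2] at h0
    have hasq : 0 < a ^ 2 * S :=
      mul_pos (by nlinarith [mul_pos (neg_pos.mpr ha) (neg_pos.mpr ha)]) hSpos
    nlinarith [hasq]
  · intro hlt
    have hnum : P + n * lam < 0 := by nlinarith
    refine ⟨(P + n * lam) / S, ?_, div_neg_of_neg_of_pos hnum hSpos⟩
    rw [isMinOn_iff]
    intro α _
    simp only [expand]
    set a : ℝ := (P + n * lam) / S with ha
    have haS : a * S = P + n * lam := div_mul_cancel₀ _ (ne_of_gt hSpos)
    have haneg : a < 0 := div_neg_of_neg_of_pos hnum hSpos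
    rw [abs_of_neg haneg, e1, e1]
    have habs : -|α| ≤ α := neg_abs_le α
    have key : (R - 2 * a * P + a ^ 2 * S) + 2 * n * (lam * -a)
        ≤ (R - 2 * α * P + α ^ 2 * S) + 2 * n * (lam * |α|) := by
      have haS' : (α - a) * (a * S) = (α - a) * (P + n * lam) := by rw [haS]
      have hs : 0 ≤ (α - a) ^ 2 * S := mul_nonneg (sq_nonneg _) hSpos.le
      have hpos : 0 ≤ (n : ℝ) * lam * (α + |α|) :=
        mul_nonneg (mul_nonneg hnpos.le hlam.le) (by linarith)
      nlinarith [haS', hs, hpos]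
    gcongr
end

section
/- Let n ≥ 2 and let the random vector x = (x₁, …, x_n) have law equal to the n-fold product of the standard normal distribution N(0,1). Then for any two non-constant vectors y, y′ ∈ ℝⁿ, the random variables n σ_x² Cor²(x, y) and n σ_x² Cor²(x, y′) have the same law; that is, the distribution of n σ_x² Cor²(x, y) does not depend on y. -/
open Finset MeasureTheory ProbabilityTheory
open scoped ENNReal Real

/-- Sample mean of a vector. -/
noncomputable def sampleMean {n : ℕ} (v : Fin n → ℝ) : ℝ := (∑ i, v i) / n

/-- Sample variance of a vector. -/
noncomputable def sampleVar {n : ℕ} (v : Fin n → ℝ) : ℝ :=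
  (∑ i, (v i - sampleMean v) ^ 2) / n

/-- Pearson sample correlation of two vectors. -/
noncomputable def sampleCor {n : ℕ} (x y : Fin n → ℝ) : ℝ :=
  (∑ i, (x i - sampleMean x) * (y i - sampleMean y)) /
    (n * Real.sqrt (sampleVar x) * Real.sqrt (sampleVar y))

lemma lintegral_pi_prod : ∀ {n : ℕ} (μ : Fin n → Measure ℝ) [∀ i, SigmaFinite (μ i)]
    (f : Fin n → ℝ → ℝ≥0∞), (∀ i, Measurable (f i)) →
    ∫⁻ x, ∏ i, f i (x i) ∂Measure.pi μ = ∏ i, ∫⁻ t, f i t ∂μ i := by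
  intro n
  induction n with
  | zero => intro μ _ f hf; simp
  | succ n ih =>
    intro μ _ f hf
    have h := (measurePreserving_piFinSuccAbove μ 0).symm
    have hF : Measurable fun x : Fin (n+1) → ℝ => ∏ i, f i (x i) :=
      Finset.measurable_prod _ fun i _ => (hf i).comp (measurable_pi_apply i)
    have key : ∫⁻ x, ∏ i, f i (x i) ∂Measure.pi μ
        = ∫⁻ p : ℝ × (Fin n → ℝ), f 0 p.1 * ∏ j : Fin n, f j.succ (p.2 j)
            ∂((μ 0).prod (Measure.pi fun j => μ ((0 : Fin (n+1)).succAbove j))) := by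
      rw [← h.lintegral_comp hF]
      congr 1
      ext p
      simp [MeasurableEquiv.piFinSuccAbove_symm_apply, Fin.prod_univ_succ,
        Fin.zero_succAbove]
    rw [key, lintegral_prod_mul (f := f 0) (g := fun w : Fin n → ℝ => ∏ j, f j.succ (w j))
      ((hf 0).aemeasurable)
      (Finset.measurable_prod _ fun j _ =>
        (hf j.succ).comp (measurable_pi_apply j)).aemeasurable]
    have h2 := ih (fun j => μ ((0 : Fin (n+1)).succAbove j)) (fun j => f j.succ)
      (fun j => hf j.succ)
    rw [h2, Fin.prod_univ_succ fun i => ∫⁻ t, f i t ∂μ i]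
    simp [Fin.zero_succAbove]

lemma pi_withDensity {n : ℕ} (μ : Fin n → Measure ℝ) [∀ i, SigmaFinite (μ i)]
    (g : Fin n → ℝ → ℝ≥0∞) (hg : ∀ i, Measurable (g i))
    [∀ i, SigmaFinite ((μ i).withDensity (g i))] :
    Measure.pi (fun i => (μ i).withDensity (g i)) =
      (Measure.pi μ).withDensity (fun x => ∏ i, g i (x i)) := by
  refine Measure.pi_eq fun s hs => ?_
  rw [withDensity_apply _ (MeasurableSet.univ_pi hs),
    ← lintegral_indicator (MeasurableSet.univ_pi hs)]
  have hind : ∀ x : Fin n → ℝ,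
      (Set.univ.pi s).indicator (fun x => ∏ i, g i (x i)) x
        = ∏ i, (s i).indicator (g i) (x i) := by
    intro x
    by_cases hx : x ∈ Set.univ.pi s
    · rw [Set.indicator_of_mem hx]
      exact Finset.prod_congr rfl fun i _ =>
        (Set.indicator_of_mem (hx i (Set.mem_univ i)) _).symm
    · rw [Set.indicator_of_notMem hx]
      have : ∃ i, x i ∉ s i := by
        by_contra hc
        push_neg at hc
        exact hx fun i _ => hc i
      obtain ⟨i, hi⟩ := this
      exact (Finset.prod_eq_zero (Finset.mem_univ i)
        (Set.indicator_of_notMem hi _)).symm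
  simp_rw [hind]
  rw [lintegral_pi_prod μ _ (fun i => (hg i).indicator (hs i))]
  exact Finset.prod_congr rfl fun i _ => by
    rw [lintegral_indicator (hs i), withDensity_apply _ (hs i)]

lemma gaussian_pi_eq (n : ℕ) :
    (Measure.pi fun _ : Fin n => gaussianReal 0 1) =
      (volume : Measure (Fin n → ℝ)).withDensity
        (fun x => ∏ i, gaussianPDF 0 1 (x i)) := by
  haveI : SigmaFinite ((volume : Measure ℝ).withDensity (gaussianPDF 0 1)) := by
    rw [← gaussianReal_of_var_ne_zero 0 one_ne_zero]; infer_instance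
  calc (Measure.pi fun _ : Fin n => gaussianReal 0 1)
      = Measure.pi (fun _ : Fin n =>
          (volume : Measure ℝ).withDensity (gaussianPDF 0 1)) := by
        simp_rw [gaussianReal_of_var_ne_zero 0 one_ne_zero]
    _ = (Measure.pi fun _ : Fin n => (volume : Measure ℝ)).withDensity
          (fun x => ∏ i, gaussianPDF 0 1 (x i)) :=
        pi_withDensity _ _ (fun _ => measurable_gaussianPDF 0 1)
    _ = (volume : Measure (Fin n → ℝ)).withDensity
          (fun x => ∏ i, gaussianPDF 0 1 (x i)) := by rw [← volume_pi]

lemma prod_gaussianPDF (n : ℕ) (x : Fin n → ℝ) :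
    ∏ i, gaussianPDF 0 1 (x i)
      = ENNReal.ofReal ((Real.sqrt (2 * Real.pi))⁻¹ ^ n
          * Real.exp (-(∑ i, (x i) ^ 2) / 2)) := by
  have h : ∀ t : ℝ, gaussianPDF 0 1 t
      = ENNReal.ofReal ((Real.sqrt (2 * Real.pi))⁻¹ * Real.exp (-(t ^ 2) / 2)) := by
    intro t
    simp [gaussianPDF, gaussianPDFReal]
  simp_rw [h]
  rw [← ENNReal.ofReal_prod_of_nonneg]
  · congr 1
    rw [Finset.prod_mul_distrib, Finset.prod_const, ← Real.exp_sum]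
    congr 2
    · simp
    · rw [← Finset.sum_div, ← Finset.sum_neg_distrib]
  · intro i _
    positivity

lemma sum_sq_eq_norm_sq {n : ℕ} (v : EuclideanSpace ℝ (Fin n)) :
    ∑ i, v i ^ 2 = ‖v‖ ^ 2 := by
  rw [EuclideanSpace.norm_eq, Real.sq_sqrt (by positivity)]
  simp [Real.norm_eq_abs, sq_abs]

lemma gaussian_pi_map_isometry {n : ℕ}
    (L : EuclideanSpace ℝ (Fin n) ≃ₗᵢ[ℝ] EuclideanSpace ℝ (Fin n)) :
    MeasurePreserving
      (fun x : Fin n → ℝ => ((MeasurableEquiv.toLp 2 (Fin n → ℝ)).symm)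
        (L (((MeasurableEquiv.toLp 2 (Fin n → ℝ)).symm).symm x)))
      (Measure.pi fun _ : Fin n => gaussianReal 0 1)
      (Measure.pi fun _ : Fin n => gaussianReal 0 1) := by
  set e := (MeasurableEquiv.toLp 2 (Fin n → ℝ)).symm with he
  set T : (Fin n → ℝ) → (Fin n → ℝ) := fun x => e (L (e.symm x)) with hT
  have hTm : Measurable T :=
    e.measurable.comp (L.continuous.measurable.comp e.symm.measurable)
  have hTvol : MeasurePreserving T volume volume :=
    (EuclideanSpace.volume_preserving_symm_measurableEquiv_toLp (Fin n)).comp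
      ((L.measurePreserving).comp
        ((EuclideanSpace.volume_preserving_symm_measurableEquiv_toLp (Fin n)).symm e))
  set f : (Fin n → ℝ) → ℝ≥0∞ := fun x => ∏ i, gaussianPDF 0 1 (x i) with hf
  have hfm : Measurable f :=
    Finset.measurable_prod _ fun i _ =>
      (measurable_gaussianPDF 0 1).comp (measurable_pi_apply i)
  have hfT : ∀ x, f (T x) = f x := by
    intro x
    rw [hf]
    simp only
    rw [prod_gaussianPDF, prod_gaussianPDF]
    have h1 : ∑ i, (T x i) ^ 2 = ∑ i, (x i) ^ 2 := by
      have h2 : ∑ i, (T x i) ^ 2 = ∑ i, ((L (e.symm x)) i) ^ 2 := rfl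
      have h3 : ∑ i, (x i) ^ 2 = ∑ i, ((e.symm x : EuclideanSpace ℝ (Fin n)) i) ^ 2 := rfl
      rw [h2, h3, sum_sq_eq_norm_sq, sum_sq_eq_norm_sq, L.norm_map]
    rw [h1]
  constructor
  · exact hTm
  rw [gaussian_pi_eq]
  ext s hs
  rw [Measure.map_apply hTm hs, withDensity_apply _ (hTm hs), withDensity_apply _ hs,
    ← lintegral_indicator (hTm hs), ← lintegral_indicator hs]
  have hind : ∀ x, (T ⁻¹' s).indicator f x = s.indicator f (T x) := by
    intro x
    by_cases hx : T x ∈ s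
    · rw [Set.indicator_of_mem hx, Set.indicator_of_mem (by exact hx), hfT]
    · rw [Set.indicator_of_notMem hx, Set.indicator_of_notMem (by exact hx)]
  refine (lintegral_congr fun x => hind x).trans ?_
  exact hTvol.lintegral_comp (hfm.indicator hs)

open scoped RealInnerProductSpace in
lemma map_inner_sq_eq {n : ℕ} (u u' : Fin n → ℝ)
    (hu : ∑ i, u i ^ 2 = 1) (hu' : ∑ i, u' i ^ 2 = 1) :
    Measure.map (fun x : Fin n → ℝ => (∑ i, u i * x i) ^ 2)
        (Measure.pi fun _ : Fin n => gaussianReal 0 1)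
      = Measure.map (fun x : Fin n → ℝ => (∑ i, u' i * x i) ^ 2)
        (Measure.pi fun _ : Fin n => gaussianReal 0 1) := by
  set e := (MeasurableEquiv.toLp 2 (Fin n → ℝ)).symm with he
  set ue : EuclideanSpace ℝ (Fin n) := e.symm u with hue
  set u'e : EuclideanSpace ℝ (Fin n) := e.symm u' with hu'e
  have hnorm : ∀ (v : Fin n → ℝ), (∑ i, v i ^ 2 = 1) →
      ‖(e.symm v : EuclideanSpace ℝ (Fin n))‖ = 1 := by
    intro v hv
    have h1 : ∑ i, (e.symm v : EuclideanSpace ℝ (Fin n)) i ^ 2 = 1 := hv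
    rw [sum_sq_eq_norm_sq] at h1
    nlinarith [norm_nonneg (e.symm v : EuclideanSpace ℝ (Fin n))]
  have hn : ‖ue‖ = ‖u'e‖ := by rw [hnorm u hu, hnorm u' hu']
  set L := Submodule.reflection (ℝ ∙ (ue - u'e))ᗮ with hL
  have hLu : L ue = u'e := Submodule.reflection_sub hn
  have hLsymm : L.symm ue = u'e := by rw [hL, Submodule.reflection_symm]; exact hLu
  have hkey : ∀ x : Fin n → ℝ,
      ∑ i, u i * (e (L (e.symm x))) i = ∑ i, u' i * x i := by
    intro x
    have h1 : ∑ i, u i * (e (L (e.symm x))) i = ⟪ue, L (e.symm x)⟫ := by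
      simp [PiLp.inner_apply, RCLike.inner_apply]
      exact Finset.sum_congr rfl fun i _ => mul_comm _ _
    have h2 : ⟪ue, L (e.symm x)⟫ = ⟪L.symm ue, e.symm x⟫ := by
      conv_lhs => rw [← L.apply_symm_apply ue]
      rw [L.inner_map_map]
    have h3 : ⟪L.symm ue, e.symm x⟫ = ∑ i, u' i * x i := by
      rw [hLsymm]
      simp [PiLp.inner_apply, RCLike.inner_apply]
      exact Finset.sum_congr rfl fun i _ => mul_comm _ _
    rw [h1, h2, h3]
  have hT := gaussian_pi_map_isometry L
  have hg : Measurable (fun w : Fin n → ℝ => (∑ i, u i * w i) ^ 2) := by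
    apply Measurable.pow_const
    exact Finset.measurable_sum _ fun i _ => by fun_prop
  calc Measure.map (fun x : Fin n → ℝ => (∑ i, u i * x i) ^ 2)
        (Measure.pi fun _ : Fin n => gaussianReal 0 1)
      = Measure.map (fun x : Fin n → ℝ => (∑ i, u i * x i) ^ 2)
        (Measure.map (fun x : Fin n → ℝ => e (L (e.symm x)))
          (Measure.pi fun _ : Fin n => gaussianReal 0 1)) := by rw [hT.map_eq]
    _ = Measure.map ((fun x : Fin n → ℝ => (∑ i, u i * x i) ^ 2)
          ∘ (fun x : Fin n → ℝ => e (L (e.symm x))))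
        (Measure.pi fun _ : Fin n => gaussianReal 0 1) := Measure.map_map hg hT.measurable
    _ = Measure.map (fun x : Fin n → ℝ => (∑ i, u' i * x i) ^ 2)
        (Measure.pi fun _ : Fin n => gaussianReal 0 1) := by
          congr 1
          funext x
          simp only [Function.comp_apply]
          rw [hkey x]

lemma sampleVar_nonneg {n : ℕ} (y : Fin n → ℝ) : 0 ≤ sampleVar y := by
  unfold sampleVar
  positivity

lemma sampleVar_pos {n : ℕ} (hn : n ≠ 0) (y : Fin n → ℝ) (hy : ∃ i j, y i ≠ y j) :
    0 < sampleVar y := by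
  rcases hy with ⟨i, j, hij⟩
  rcases (sampleVar_nonneg y).lt_or_eq with h | h
  · exact h
  · exfalso
    have hn' : (0:ℝ) < n := by
      have := Nat.pos_of_ne_zero hn
      exact_mod_cast this
    have hsum : ∑ k, (y k - sampleMean y) ^ 2 = 0 := by
      have h' := h.symm
      unfold sampleVar at h'
      field_simp at h'
      simpa using h'
    have hall : ∀ k : Fin n, (y k - sampleMean y) ^ 2 = 0 := by
      intro k
      have := (Finset.sum_eq_zero_iff_of_nonneg
        (fun k _ => sq_nonneg (y k - sampleMean y))).mp hsum
      exact this k (Finset.mem_univ k)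
    have hi : y i = sampleMean y := by have := hall i; nlinarith [this]
    have hj : y j = sampleMean y := by have := hall j; nlinarith [this]
    exact hij (hi.trans hj.symm)

lemma sum_center_eq_zero {n : ℕ} (hn : n ≠ 0) (y : Fin n → ℝ) :
    ∑ i, (y i - sampleMean y) = 0 := by
  have hn' : (n:ℝ) ≠ 0 := Nat.cast_ne_zero.mpr hn
  rw [Finset.sum_sub_distrib, Finset.sum_const, Finset.card_univ, Fintype.card_fin]
  unfold sampleMean
  rw [nsmul_eq_mul]
  field_simp
  simp

lemma sum_center_sq {n : ℕ} (hn : n ≠ 0) (y : Fin n → ℝ) :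
    ∑ i, (y i - sampleMean y) ^ 2 = n * sampleVar y := by
  have hn' : (n:ℝ) ≠ 0 := Nat.cast_ne_zero.mpr hn
  unfold sampleVar
  field_simp

lemma sum_u_sq {n : ℕ} (hn : n ≠ 0) (y : Fin n → ℝ) (hv : 0 < sampleVar y) :
    ∑ i, ((y i - sampleMean y) / Real.sqrt ((n : ℝ) * sampleVar y)) ^ 2 = 1 := by
  have hn' : (0:ℝ) < n := by exact_mod_cast Nat.pos_of_ne_zero hn
  have hpos : (0:ℝ) < (n : ℝ) * sampleVar y := by positivity
  simp_rw [div_pow, Real.sq_sqrt hpos.le]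
  rw [← Finset.sum_div, sum_center_sq hn y, div_self hpos.ne']

lemma stat_eq {n : ℕ} (hn : n ≠ 0) (y : Fin n → ℝ) (hv : 0 < sampleVar y)
    (x : Fin n → ℝ) :
    (n : ℝ) * sampleVar x * sampleCor x y ^ 2
      = (∑ i, ((y i - sampleMean y) / Real.sqrt ((n : ℝ) * sampleVar y)) * x i) ^ 2 := by
  have hn' : (0:ℝ) < n := by exact_mod_cast Nat.pos_of_ne_zero hn
  have hc : (0:ℝ) < Real.sqrt ((n : ℝ) * sampleVar y) := Real.sqrt_pos.mpr (by positivity)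
  set c := Real.sqrt ((n : ℝ) * sampleVar y) with hcdef
  have hc2 : c ^ 2 = (n : ℝ) * sampleVar y := Real.sq_sqrt (by positivity)
  set S := ∑ i, (x i - sampleMean x) * (y i - sampleMean y) with hS
  have hrhs : ∑ i, ((y i - sampleMean y) / c) * x i = S / c := by
    rw [hS]
    simp_rw [div_mul_eq_mul_div]
    rw [← Finset.sum_div]
    congr 1
    have : ∑ i, (x i - sampleMean x) * (y i - sampleMean y)
        = ∑ i, (y i - sampleMean y) * x i
          - sampleMean x * ∑ i, (y i - sampleMean y) := by
      rw [Finset.mul_sum, ← Finset.sum_sub_distrib]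
      congr 1; funext i; ring
    rw [this, sum_center_eq_zero hn y]
    ring_nf
    congr 1
    funext i
    ring
  rw [hrhs]
  rcases eq_or_lt_of_le (sampleVar_nonneg x) with hvx | hvx
  · have hx : ∀ k : Fin n, x k - sampleMean x = 0 := by
      intro k
      have hsum : ∑ k, (x k - sampleMean x) ^ 2 = 0 := by
        rw [sum_center_sq hn x, ← hvx, mul_zero]
      have := (Finset.sum_eq_zero_iff_of_nonneg
        (fun k _ => sq_nonneg (x k - sampleMean x))).mp hsum k (Finset.mem_univ k)
      nlinarith [this]
    have hS0 : S = 0 := by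
      rw [hS]
      apply Finset.sum_eq_zero
      intro i _
      rw [hx i, zero_mul]
    rw [hS0, ← hvx]
    simp
  · unfold sampleCor
    rw [← hS]
    have hvy : (0:ℝ) < sampleVar y := hv
    have h1 : Real.sqrt (sampleVar x) ^ 2 = sampleVar x := Real.sq_sqrt hvx.le
    have h2 : Real.sqrt (sampleVar y) ^ 2 = sampleVar y := Real.sq_sqrt hvy.le
    have h3 : Real.sqrt (sampleVar x) ≠ 0 := by positivity
    have h4 : Real.sqrt (sampleVar y) ≠ 0 := by positivity
    rw [div_pow, div_pow, hc2]
    rw [mul_pow, mul_pow, h1, h2]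
    field_simp

/-- Rotational invariance: when the coordinates of `x` are i.i.d. standard normal,
the law of `n σ_x² Cor²(x, y)` does not depend on the non-constant vector `y`. -/
theorem nVarCorSq_law_indep_of_y (n : ℕ) (hn : 2 ≤ n) (y y' : Fin n → ℝ)
    (hy : ∃ i j, y i ≠ y j) (hy' : ∃ i j, y' i ≠ y' j) :
    Measure.map (fun x : Fin n → ℝ => (n : ℝ) * sampleVar x * sampleCor x y ^ 2)
        (Measure.pi fun _ : Fin n => gaussianReal 0 1) =
      Measure.map (fun x : Fin n → ℝ => (n : ℝ) * sampleVar x * sampleCor x y' ^ 2)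
        (Measure.pi fun _ : Fin n => gaussianReal 0 1) := by
  have hn0 : n ≠ 0 := by omega
  have hvy := sampleVar_pos hn0 y hy
  have hvy' := sampleVar_pos hn0 y' hy'
  have h1 : (fun x : Fin n → ℝ => (n : ℝ) * sampleVar x * sampleCor x y ^ 2)
      = fun x : Fin n → ℝ =>
        (∑ i, ((y i - sampleMean y) / Real.sqrt ((n : ℝ) * sampleVar y)) * x i) ^ 2 :=
    funext (stat_eq hn0 y hvy)
  have h2 : (fun x : Fin n → ℝ => (n : ℝ) * sampleVar x * sampleCor x y' ^ 2)
      = fun x : Fin n → ℝ =>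
        (∑ i, ((y' i - sampleMean y') / Real.sqrt ((n : ℝ) * sampleVar y')) * x i) ^ 2 :=
    funext (stat_eq hn0 y' hvy')
  rw [h1, h2]
  exact map_inner_sq_eq _ _ (sum_u_sq hn0 y hvy) (sum_u_sq hn0 y' hvy')
end
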